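/- Let S be the unilateral shift on ℓ²(ℕ) and let λ, μ ∈ ℂ satisfy |λ − μ| > 2. Then every bounded operator T on ℓ²(ℕ) satisfying T(λI + S) = (μI + S)T is zero. Consequently the Kronecker representations (H^λ, f^λ) and (H^μ, f^μ), given by f^λ_α = I, f^λ_β = λI + S and f^μ_α = I, f^μ_β = μI + S on ℓ²(ℕ), are relatively prime: Hom((H^λ,f^λ),(H^μ,f^μ)) = 0 and Hom((H^μ,f^μ),(H^λ,f^λ)) = 0. -/

import Mathlib

open scoped BigOperators

noncomputable section

local notation "H" => lp (fun _ : ℕ => ℂ) 2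

lemma shift_norm_le
    (S : H →L[ℂ] H)
    (hS : ∀ n : ℕ, S (lp.single 2 n (1 : ℂ)) = lp.single 2 (n + 1) (1 : ℂ)) :
    ‖S‖ ≤ 1 := by
  have hp : (0:ℝ) < (2 : ENNReal).toReal := by norm_num
  -- norm preserved on truncations
  have key : ∀ (f : H) (s : Finset ℕ),
      ‖S (∑ i ∈ s, lp.single 2 i (f i))‖ = ‖∑ i ∈ s, lp.single 2 i (f i)‖ := by
    intro f s
    have h1 : S (∑ i ∈ s, lp.single 2 i (f i)) = ∑ i ∈ s, lp.single 2 (i+1) (f i) := by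
      rw [map_sum]
      refine Finset.sum_congr rfl fun i _ => ?_
      have e : (lp.single 2 i (f i) : H) = f i • (lp.single 2 i (1:ℂ) : H) := by
        rw [← lp.single_smul, smul_eq_mul, mul_one]
      rw [e, map_smul, hS, ← lp.single_smul, smul_eq_mul, mul_one]
    set g : ℕ → ℂ := fun j => if j = 0 then 0 else f (j - 1) with hg
    have h2 : ∑ i ∈ s, lp.single 2 (i+1) (f i)
        = ∑ j ∈ s.image (· + 1), lp.single 2 j (g j) := by
      rw [Finset.sum_image (by intro a _ b _ h; simp only at h; omega)]
      refine Finset.sum_congr rfl fun i _ => ?_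
      simp [hg]
    have h3 : ‖∑ j ∈ s.image (· + 1), lp.single 2 j (g j)‖ ^ (2:ENNReal).toReal
        = ∑ j ∈ s.image (· + 1), ‖g j‖ ^ (2:ENNReal).toReal :=
      lp.norm_sum_single hp g _
    have h4 : ‖∑ i ∈ s, lp.single 2 i (f i)‖ ^ (2:ENNReal).toReal
        = ∑ i ∈ s, ‖f i‖ ^ (2:ENNReal).toReal :=
      lp.norm_sum_single hp (fun i => f i) s
    have h5 : ∑ j ∈ s.image (· + 1), ‖g j‖ ^ (2:ENNReal).toReal
        = ∑ i ∈ s, ‖f i‖ ^ (2:ENNReal).toReal := by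
      rw [Finset.sum_image (by intro a _ b _ h; simp only at h; omega)]
      refine Finset.sum_congr rfl fun i _ => ?_
      simp [hg]
    have := h3.trans (h5.trans h4.symm)
    rw [h1, h2]
    exact Real.rpow_left_injOn (by norm_num) (by simp [Set.mem_setOf_eq]) (by simp [Set.mem_setOf_eq]) this
  -- every f is limit of truncations
  have hnorm : ∀ f : H, ‖S f‖ = ‖f‖ := by
    intro f
    have hsum : HasSum (fun i : ℕ => lp.single 2 i (f i : ℂ)) f :=
      lp.hasSum_single (by norm_num) f
    have h1 : Filter.Tendsto (fun s : Finset ℕ => ‖S (∑ i ∈ s, lp.single 2 i (f i))‖)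
        Filter.atTop (nhds ‖S f‖) :=
      ((S.continuous.tendsto f).comp hsum).norm
    have h2 : Filter.Tendsto (fun s : Finset ℕ => ‖∑ i ∈ s, lp.single 2 i (f i)‖)
        Filter.atTop (nhds ‖f‖) := hsum.norm
    have : (fun s : Finset ℕ => ‖S (∑ i ∈ s, lp.single 2 i (f i))‖)
        = fun s : Finset ℕ => ‖∑ i ∈ s, lp.single 2 i (f i)‖ := funext (key f)
    rw [this] at h1
    exact tendsto_nhds_unique h1 h2
  refine ContinuousLinearMap.opNorm_le_bound S zero_le_one fun f => ?_
  rw [hnorm f, one_mul]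

lemma intertwine_zero
    (S : H →L[ℂ] H) (hSnorm : ‖S‖ ≤ 1)
    (a b : ℂ) (hab : 2 < ‖a - b‖)
    (T : H →L[ℂ] H)
    (h : T ∘L (a • (1 : H →L[ℂ] H) + S) = (b • (1 : H →L[ℂ] H) + S) ∘L T) :
    T = 0 := by
  have h2 : (b - a) • T = T ∘L S - S ∘L T := by
    have hth := h
    rw [ContinuousLinearMap.comp_add, ContinuousLinearMap.add_comp,
      ContinuousLinearMap.comp_smul, ContinuousLinearMap.smul_comp,
      ContinuousLinearMap.one_def, ContinuousLinearMap.comp_id,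
      ContinuousLinearMap.id_comp] at hth
    rw [sub_smul, sub_eq_sub_iff_add_eq_add, ← hth]
    exact add_comm _ _
  have hTnonneg : (0:ℝ) ≤ ‖T‖ := norm_nonneg T
  have hn : ‖a - b‖ * ‖T‖ ≤ 2 * ‖T‖ := by
    have e1 : ‖(b - a) • T‖ = ‖a - b‖ * ‖T‖ := by
      rw [norm_smul (b - a) T, norm_sub_rev]
    calc ‖a - b‖ * ‖T‖ = ‖(b - a) • T‖ := e1.symm
      _ = ‖T ∘L S - S ∘L T‖ := by rw [h2]
      _ ≤ ‖T ∘L S‖ + ‖S ∘L T‖ := norm_sub_le _ _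
      _ ≤ ‖T‖ * ‖S‖ + ‖S‖ * ‖T‖ :=
          add_le_add (ContinuousLinearMap.opNorm_comp_le _ _) (ContinuousLinearMap.opNorm_comp_le _ _)
      _ ≤ 2 * ‖T‖ := by nlinarith [ContinuousLinearMap.opNorm_nonneg S]
  have : ‖T‖ ≤ 0 := by nlinarith
  exact norm_le_zero_iff.mp this





/-- **Kronecker representations `(I, λI + S)` and `(I, μI + S)` with `|λ - μ| > 2` are
relatively prime.**
Here `S` is the unilateral shift on `ℓ²(ℕ)` (`S e_n = e_{n+1}` on the canonical basis).
Every bounded operator `T` with `T (λI + S) = (μI + S) T` is zero; consequently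
`Hom((H^λ,f^λ),(H^μ,f^μ)) = 0` and `Hom((H^μ,f^μ),(H^λ,f^λ)) = 0`, where a homomorphism
is a pair `(T₁,T₂)` with `T₂ ∘ I = I ∘ T₁` and `T₂ (λI + S) = (μI + S) T₁`. -/
theorem stmt_9
    (S : lp (fun _ : ℕ => ℂ) 2 →L[ℂ] lp (fun _ : ℕ => ℂ) 2)
    (hS : ∀ n : ℕ, S (lp.single 2 n (1 : ℂ)) = lp.single 2 (n + 1) (1 : ℂ))
    (l m : ℂ) (hlm : 2 < ‖l - m‖) :
    (∀ T : lp (fun _ : ℕ => ℂ) 2 →L[ℂ] lp (fun _ : ℕ => ℂ) 2,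
      T ∘L (l • (1 : lp (fun _ : ℕ => ℂ) 2 →L[ℂ] lp (fun _ : ℕ => ℂ) 2) + S) =
        (m • (1 : lp (fun _ : ℕ => ℂ) 2 →L[ℂ] lp (fun _ : ℕ => ℂ) 2) + S) ∘L T →
      T = 0)
    ∧
    (∀ T₁ T₂ : lp (fun _ : ℕ => ℂ) 2 →L[ℂ] lp (fun _ : ℕ => ℂ) 2,
      T₂ ∘L (1 : lp (fun _ : ℕ => ℂ) 2 →L[ℂ] lp (fun _ : ℕ => ℂ) 2) =
        (1 : lp (fun _ : ℕ => ℂ) 2 →L[ℂ] lp (fun _ : ℕ => ℂ) 2) ∘L T₁ →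
      T₂ ∘L (l • (1 : lp (fun _ : ℕ => ℂ) 2 →L[ℂ] lp (fun _ : ℕ => ℂ) 2) + S) =
        (m • (1 : lp (fun _ : ℕ => ℂ) 2 →L[ℂ] lp (fun _ : ℕ => ℂ) 2) + S) ∘L T₁ →
      T₁ = 0 ∧ T₂ = 0)
    ∧
    (∀ T₁ T₂ : lp (fun _ : ℕ => ℂ) 2 →L[ℂ] lp (fun _ : ℕ => ℂ) 2,
      T₂ ∘L (1 : lp (fun _ : ℕ => ℂ) 2 →L[ℂ] lp (fun _ : ℕ => ℂ) 2) =
        (1 : lp (fun _ : ℕ => ℂ) 2 →L[ℂ] lp (fun _ : ℕ => ℂ) 2) ∘L T₁ →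
      T₂ ∘L (m • (1 : lp (fun _ : ℕ => ℂ) 2 →L[ℂ] lp (fun _ : ℕ => ℂ) 2) + S) =
        (l • (1 : lp (fun _ : ℕ => ℂ) 2 →L[ℂ] lp (fun _ : ℕ => ℂ) 2) + S) ∘L T₁ →
      T₁ = 0 ∧ T₂ = 0) := by
  have hSnorm : ‖S‖ ≤ 1 := shift_norm_le S hS
  have hml : 2 < ‖m - l‖ := by rwa [norm_sub_rev]
  have eq12 : ∀ T₁ T₂ : lp (fun _ : ℕ => ℂ) 2 →L[ℂ] lp (fun _ : ℕ => ℂ) 2,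
      T₂ ∘L (1 : lp (fun _ : ℕ => ℂ) 2 →L[ℂ] lp (fun _ : ℕ => ℂ) 2) =
        (1 : lp (fun _ : ℕ => ℂ) 2 →L[ℂ] lp (fun _ : ℕ => ℂ) 2) ∘L T₁ → T₂ = T₁ := by
    intro T₁ T₂ h
    rwa [ContinuousLinearMap.one_def, ContinuousLinearMap.comp_id,
      ContinuousLinearMap.id_comp] at h
  refine ⟨fun T h => intertwine_zero S hSnorm l m hlm T h, ?_, ?_⟩
  · intro T₁ T₂ h1 h2
    have hT : T₂ = T₁ := eq12 T₁ T₂ h1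
    subst hT
    have := intertwine_zero S hSnorm l m hlm T₂ h2
    exact ⟨this, this⟩
  · intro T₁ T₂ h1 h2
    have hT : T₂ = T₁ := eq12 T₁ T₂ h1
    subst hT
    have := intertwine_zero S hSnorm m l hml T₂ h2
    exact ⟨this, this⟩
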